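/- The kernel of the ℂ-algebra homomorphism from the polynomial ring ℂ[T₄,T₆,T₈,T₁₀,S₁₀,T₁₂] to R determined by T₄ ↦ t₄, T₆ ↦ t₆, T₈ ↦ t₈, T₁₀ ↦ t₁₀, S₁₀ ↦ s₁₀, T₁₂ ↦ t₁₂ is the principal ideal generated by the single element S₁₀² − (T₁₀² − 4T₈T₁₂). -/

import Mathlib

open MvPolynomial

noncomputable def t4 : MvPolynomial (Fin 6) ℂ := X 1
noncomputable def t6 : MvPolynomial (Fin 6) ℂ := X 4
noncomputable def t8 : MvPolynomial (Fin 6) ℂ := X 0 * X 2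
noncomputable def t10 : MvPolynomial (Fin 6) ℂ := X 0 * X 5 + X 2 * X 3
noncomputable def s10 : MvPolynomial (Fin 6) ℂ := X 0 * X 5 - X 2 * X 3
noncomputable def t12 : MvPolynomial (Fin 6) ℂ := X 3 * X 5

/-- The ℂ-algebra homomorphism `ℂ[T₄,T₆,T₈,T₁₀,S₁₀,T₁₂] → R` sending
`T₄ ↦ t₄, T₆ ↦ t₆, T₈ ↦ t₈, T₁₀ ↦ t₁₀, S₁₀ ↦ s₁₀, T₁₂ ↦ t₁₂`
(variable indices `0,1,2,3,4,5` correspond to `T₄,T₆,T₈,T₁₀,S₁₀,T₁₂`). -/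
noncomputable def phi : MvPolynomial (Fin 6) ℂ →ₐ[ℂ] MvPolynomial (Fin 6) ℂ :=
  aeval ![t4, t6, t8, t10, s10, t12]

/-! ### Auxiliary machinery -/

/-- The "monomial" version of `phi` after the linear change of variables
`T₁₀ = A + B`, `S₁₀ = A − B` (variable 3 ↦ u₁u₆, variable 4 ↦ u₃u₄). -/
noncomputable def mu : MvPolynomial (Fin 6) ℂ →ₐ[ℂ] MvPolynomial (Fin 6) ℂ :=
  aeval ![X 1, X 4, X 0 * X 2, X 0 * X 5, X 2 * X 3, X 3 * X 5]

/-- Change of variables. -/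
noncomputable def chi : MvPolynomial (Fin 6) ℂ →ₐ[ℂ] MvPolynomial (Fin 6) ℂ :=
  aeval ![X 0, X 1, X 2, X 3 + X 4, X 3 - X 4, X 5]

/-- Inverse change of variables. -/
noncomputable def chi' : MvPolynomial (Fin 6) ℂ →ₐ[ℂ] MvPolynomial (Fin 6) ℂ :=
  aeval ![X 0, X 1, X 2, C (2:ℂ)⁻¹ * (X 3 + X 4), C (2:ℂ)⁻¹ * (X 3 - X 4), X 5]

lemma mu_X0 : mu (X 0) = X 1 := aeval_X _ _
lemma mu_X1 : mu (X 1) = X 4 := aeval_X _ _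
lemma mu_X2 : mu (X 2) = X 0 * X 2 := aeval_X _ _
lemma mu_X3 : mu (X 3) = X 0 * X 5 := aeval_X _ _
lemma mu_X4 : mu (X 4) = X 2 * X 3 := aeval_X _ _
lemma mu_X5 : mu (X 5) = X 3 * X 5 := aeval_X _ _

lemma chi_X0 : chi (X 0) = X 0 := aeval_X _ _
lemma chi_X1 : chi (X 1) = X 1 := aeval_X _ _
lemma chi_X2 : chi (X 2) = X 2 := aeval_X _ _
lemma chi_X3 : chi (X 3) = X 3 + X 4 := aeval_X _ _
lemma chi_X4 : chi (X 4) = X 3 - X 4 := aeval_X _ _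
lemma chi_X5 : chi (X 5) = X 5 := aeval_X _ _

lemma chi'_X0 : chi' (X 0) = X 0 := aeval_X _ _
lemma chi'_X1 : chi' (X 1) = X 1 := aeval_X _ _
lemma chi'_X2 : chi' (X 2) = X 2 := aeval_X _ _
lemma chi'_X3 : chi' (X 3) = C (2:ℂ)⁻¹ * (X 3 + X 4) := aeval_X _ _
lemma chi'_X4 : chi' (X 4) = C (2:ℂ)⁻¹ * (X 3 - X 4) := aeval_X _ _
lemma chi'_X5 : chi' (X 5) = X 5 := aeval_X _ _

lemma phi_X0 : phi (X 0) = t4 := aeval_X _ _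
lemma phi_X1 : phi (X 1) = t6 := aeval_X _ _
lemma phi_X2 : phi (X 2) = t8 := aeval_X _ _
lemma phi_X3 : phi (X 3) = t10 := aeval_X _ _
lemma phi_X4 : phi (X 4) = s10 := aeval_X _ _
lemma phi_X5 : phi (X 5) = t12 := aeval_X _ _

/-- The exponent map of `mu` on monomials. -/
noncomputable def Aexp (e : Fin 6 →₀ ℕ) : Fin 6 →₀ ℕ :=
  Finsupp.single 0 (e 2 + e 3) + Finsupp.single 1 (e 0) + Finsupp.single 2 (e 2 + e 4)
    + Finsupp.single 3 (e 4 + e 5) + Finsupp.single 4 (e 1) + Finsupp.single 5 (e 3 + e 5)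

lemma Aexp_apply0 (e : Fin 6 →₀ ℕ) : Aexp e 0 = e 2 + e 3 := by
  simp [Aexp, Finsupp.single_apply]
lemma Aexp_apply1 (e : Fin 6 →₀ ℕ) : Aexp e 1 = e 0 := by
  simp [Aexp, Finsupp.single_apply]
lemma Aexp_apply2 (e : Fin 6 →₀ ℕ) : Aexp e 2 = e 2 + e 4 := by
  simp [Aexp, Finsupp.single_apply]
lemma Aexp_apply3 (e : Fin 6 →₀ ℕ) : Aexp e 3 = e 4 + e 5 := by
  simp [Aexp, Finsupp.single_apply]
lemma Aexp_apply4 (e : Fin 6 →₀ ℕ) : Aexp e 4 = e 1 := by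
  simp [Aexp, Finsupp.single_apply]
lemma Aexp_apply5 (e : Fin 6 →₀ ℕ) : Aexp e 5 = e 3 + e 5 := by
  simp [Aexp, Finsupp.single_apply]

/-- Normalization of exponents: rewrite `X₂X₅ → X₃X₄` as much as possible. -/
noncomputable def nf (e : Fin 6 →₀ ℕ) : Fin 6 →₀ ℕ :=
  e - min (e 2) (e 5) • (Finsupp.single 2 1 + Finsupp.single 5 1)
    + min (e 2) (e 5) • (Finsupp.single 3 1 + Finsupp.single 4 1)

lemma nf_apply0 (e : Fin 6 →₀ ℕ) : nf e 0 = e 0 := by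
  simp [nf, Finsupp.single_apply]
lemma nf_apply1 (e : Fin 6 →₀ ℕ) : nf e 1 = e 1 := by
  simp [nf, Finsupp.single_apply]
lemma nf_apply2 (e : Fin 6 →₀ ℕ) : nf e 2 = e 2 - min (e 2) (e 5) := by
  simp [nf, Finsupp.single_apply]
lemma nf_apply3 (e : Fin 6 →₀ ℕ) : nf e 3 = e 3 + min (e 2) (e 5) := by
  simp [nf, Finsupp.single_apply]
lemma nf_apply4 (e : Fin 6 →₀ ℕ) : nf e 4 = e 4 + min (e 2) (e 5) := by
  simp [nf, Finsupp.single_apply]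
lemma nf_apply5 (e : Fin 6 →₀ ℕ) : nf e 5 = e 5 - min (e 2) (e 5) := by
  simp [nf, Finsupp.single_apply]

lemma mu_monomial (e : Fin 6 →₀ ℕ) (c : ℂ) :
    mu (monomial e c) = monomial (Aexp e) c := by
  rw [monomial_eq, monomial_eq, map_mul, algHom_C,
    Finsupp.prod_fintype _ _ (fun i => pow_zero _),
    Finsupp.prod_fintype _ _ (fun i => pow_zero _),
    map_prod, Fin.prod_univ_six, Fin.prod_univ_six,
    map_pow, map_pow, map_pow, map_pow, map_pow, map_pow,
    mu_X0, mu_X1, mu_X2, mu_X3, mu_X4, mu_X5, MvPolynomial.algebraMap_eq,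
    Aexp_apply0, Aexp_apply1, Aexp_apply2, Aexp_apply3, Aexp_apply4, Aexp_apply5]
  ring

lemma mu_eq_mapDomain (p : MvPolynomial (Fin 6) ℂ) :
    mu p = AddMonoidAlgebra.ofCoeff (Finsupp.mapDomain Aexp (AddMonoidAlgebra.coeff p)) := by
  induction p using MvPolynomial.induction_on' with
  | monomial e c =>
    rw [mu_monomial, ← single_eq_monomial, ← single_eq_monomial, AddMonoidAlgebra.single,
      AddMonoidAlgebra.single, AddMonoidAlgebra.coeff_ofCoeff, Finsupp.mapDomain_single]
  | add p q hp hq =>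
    rw [map_add, hp, hq, AddMonoidAlgebra.coeff_add, Finsupp.mapDomain_add,
      AddMonoidAlgebra.ofCoeff_add]

lemma Aexp_injOn : Set.InjOn Aexp {e : Fin 6 →₀ ℕ | e 2 = 0 ∨ e 5 = 0} := by
  intro e he f hf h
  simp only [Set.mem_setOf_eq] at he hf
  have h0 : e 2 + e 3 = f 2 + f 3 := by rw [← Aexp_apply0, ← Aexp_apply0, h]
  have h1 : e 0 = f 0 := by rw [← Aexp_apply1, ← Aexp_apply1, h]
  have h2 : e 2 + e 4 = f 2 + f 4 := by rw [← Aexp_apply2, ← Aexp_apply2, h]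
  have h3 : e 4 + e 5 = f 4 + f 5 := by rw [← Aexp_apply3, ← Aexp_apply3, h]
  have h4 : e 1 = f 1 := by rw [← Aexp_apply4, ← Aexp_apply4, h]
  have h5 : e 3 + e 5 = f 3 + f 5 := by rw [← Aexp_apply5, ← Aexp_apply5, h]
  ext j
  fin_cases j
  · show e 0 = f 0; omega
  · show e 1 = f 1; omega
  · show e 2 = f 2; omega
  · show e 3 = f 3; omega
  · show e 4 = f 4; omega
  · show e 5 = f 5; omega

lemma Aexp_nf (e : Fin 6 →₀ ℕ) : Aexp (nf e) = Aexp e := by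
  ext j
  fin_cases j
  · show Aexp (nf e) 0 = Aexp e 0
    rw [Aexp_apply0, Aexp_apply0, nf_apply2, nf_apply3]; omega
  · show Aexp (nf e) 1 = Aexp e 1
    rw [Aexp_apply1, Aexp_apply1, nf_apply0]
  · show Aexp (nf e) 2 = Aexp e 2
    rw [Aexp_apply2, Aexp_apply2, nf_apply2, nf_apply4]; omega
  · show Aexp (nf e) 3 = Aexp e 3
    rw [Aexp_apply3, Aexp_apply3, nf_apply4, nf_apply5]; omega
  · show Aexp (nf e) 4 = Aexp e 4
    rw [Aexp_apply4, Aexp_apply4, nf_apply1]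
  · show Aexp (nf e) 5 = Aexp e 5
    rw [Aexp_apply5, Aexp_apply5, nf_apply3, nf_apply5]; omega

lemma nf_mem (e : Fin 6 →₀ ℕ) : nf e 2 = 0 ∨ nf e 5 = 0 := by
  rw [nf_apply2, nf_apply5]; omega

lemma X_mul_X_pow_eq (i j : Fin 6) (k : ℕ) :
    ((X i * X j : MvPolynomial (Fin 6) ℂ)) ^ k
      = monomial (k • (Finsupp.single i 1 + Finsupp.single j 1)) 1 := by
  rw [X, X, monomial_mul, monomial_pow]
  simp

lemma monomial_sub_nf_mem (e : Fin 6 →₀ ℕ) (c : ℂ) :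
    monomial e c - monomial (nf e) c ∈
      Ideal.span {(X 2 * X 5 - X 3 * X 4 : MvPolynomial (Fin 6) ℂ)} := by
  set k := min (e 2) (e 5) with hk
  set b : Fin 6 →₀ ℕ := e - k • (Finsupp.single 2 1 + Finsupp.single 5 1) with hb
  have hb2 : k ≤ e 2 := min_le_left _ _
  have hb5 : k ≤ e 5 := min_le_right _ _
  have hbj : ∀ j, b j = e j - (k • (Finsupp.single 2 1 + Finsupp.single 5 1) : Fin 6 →₀ ℕ) j :=
    fun j => Finsupp.tsub_apply _ _ _
  have he : e = b + k • (Finsupp.single 2 1 + Finsupp.single 5 1) := by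
    ext j
    rw [Finsupp.add_apply, hbj j]
    have : (k • (Finsupp.single 2 1 + Finsupp.single 5 1) : Fin 6 →₀ ℕ) j ≤ e j := by
      rw [Finsupp.smul_apply, Finsupp.add_apply]
      fin_cases j <;> simp [Finsupp.single_apply] <;> omega
    omega
  have hnf : nf e = b + k • (Finsupp.single 3 1 + Finsupp.single 4 1) := by
    ext j
    rw [Finsupp.add_apply, hbj j]
    fin_cases j
    · show nf e 0 = _
      rw [nf_apply0]; simp [Finsupp.single_apply]
    · show nf e 1 = _
      rw [nf_apply1]; simp [Finsupp.single_apply]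
    · show nf e 2 = _
      rw [nf_apply2]; simp [Finsupp.single_apply, hk]
    · show nf e 3 = _
      rw [nf_apply3]; simp [Finsupp.single_apply, hk]
    · show nf e 4 = _
      rw [nf_apply4]; simp [Finsupp.single_apply, hk]
    · show nf e 5 = _
      rw [nf_apply5]; simp [Finsupp.single_apply, hk]
  have h1 : monomial e c = monomial b c * (X 2 * X 5 : MvPolynomial (Fin 6) ℂ) ^ k := by
    rw [X_mul_X_pow_eq, monomial_mul, mul_one, ← he]
  have h2 : monomial (nf e) c = monomial b c * (X 3 * X 4 : MvPolynomial (Fin 6) ℂ) ^ k := by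
    rw [X_mul_X_pow_eq, monomial_mul, mul_one, ← hnf]
  rw [h1, h2, ← mul_sub]
  exact Ideal.mem_span_singleton.2
    (Dvd.dvd.mul_left (sub_dvd_pow_sub_pow _ _ k) _)

lemma ker_mu_le (p : MvPolynomial (Fin 6) ℂ) (hp : mu p = 0) :
    p ∈ Ideal.span {(X 2 * X 5 - X 3 * X 4 : MvPolynomial (Fin 6) ℂ)} := by
  classical
  set q : MvPolynomial (Fin 6) ℂ := AddMonoidAlgebra.ofCoeff (Finsupp.mapDomain nf (AddMonoidAlgebra.coeff p)) with hq
  have hq' : q = ∑ e ∈ p.support, monomial (nf e) (coeff e p) := by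
    rw [hq, Finsupp.mapDomain, Finsupp.sum, AddMonoidAlgebra.ofCoeff_sum]
    exact Finset.sum_congr rfl fun e _ => single_eq_monomial _ _
  have hpq : p - q ∈ Ideal.span {(X 2 * X 5 - X 3 * X 4 : MvPolynomial (Fin 6) ℂ)} := by
    have hp' : p = ∑ e ∈ p.support, monomial e (coeff e p) :=
      (support_sum_monomial_coeff p).symm
    have : p - q = ∑ e ∈ p.support,
        (monomial e (coeff e p) - monomial (nf e) (coeff e p)) := by
      rw [Finset.sum_sub_distrib, ← hp', ← hq']
    rw [this]
    exact Ideal.sum_mem _ fun e _ => monomial_sub_nf_mem e _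
  have hmuq : mu q = 0 := by
    have hcomp : Finsupp.mapDomain (Aexp ∘ nf) (AddMonoidAlgebra.coeff p) = Finsupp.mapDomain Aexp (AddMonoidAlgebra.coeff q) := by
      rw [hq, AddMonoidAlgebra.coeff_ofCoeff]; exact Finsupp.mapDomain_comp
    have : Aexp ∘ nf = Aexp := funext Aexp_nf
    rw [mu_eq_mapDomain, ← hcomp, this, ← mu_eq_mapDomain, hp]
  have hq0 : q = 0 := by
    have hsub : ↑q.support ⊆ {e : Fin 6 →₀ ℕ | e 2 = 0 ∨ e 5 = 0} := by
      intro e he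
      have : e ∈ p.support.image nf := Finsupp.mapDomain_support he
      obtain ⟨e', _, rfl⟩ := Finset.mem_image.1 this
      exact nf_mem e'
    have h0 : ↑(0 : MvPolynomial (Fin 6) ℂ).support ⊆
        {e : Fin 6 →₀ ℕ | e 2 = 0 ∨ e 5 = 0} := by simp
    refine AddMonoidAlgebra.coeff_injective (Finsupp.mapDomain_injOn _ Aexp_injOn hsub h0 ?_)
    apply AddMonoidAlgebra.ofCoeff_injective
    rw [← mu_eq_mapDomain, hmuq]
    simp
  have : p = p - q := by rw [hq0, sub_zero]
  rw [this]
  exact hpq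

lemma phi_eq (p : MvPolynomial (Fin 6) ℂ) : phi p = mu (chi p) := by
  have : phi = mu.comp chi := by
    apply MvPolynomial.algHom_ext
    intro i
    fin_cases i
    · show phi (X 0) = mu (chi (X 0))
      rw [phi_X0, chi_X0, mu_X0]; rfl
    · show phi (X 1) = mu (chi (X 1))
      rw [phi_X1, chi_X1, mu_X1]; rfl
    · show phi (X 2) = mu (chi (X 2))
      rw [phi_X2, chi_X2, mu_X2]; rfl
    · show phi (X 3) = mu (chi (X 3))
      rw [phi_X3, chi_X3, map_add, mu_X3, mu_X4]; rfl
    · show phi (X 4) = mu (chi (X 4))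
      rw [phi_X4, chi_X4, map_sub, mu_X3, mu_X4]; rfl
    · show phi (X 5) = mu (chi (X 5))
      rw [phi_X5, chi_X5, mu_X5]; rfl
  rw [this]; rfl

lemma C_half_mul_two : (C (2:ℂ)⁻¹ : MvPolynomial (Fin 6) ℂ) * 2 = 1 := by
  rw [← map_ofNat (C : ℂ →+* MvPolynomial (Fin 6) ℂ) 2, ← C_mul]
  norm_num

lemma chi'_chi (p : MvPolynomial (Fin 6) ℂ) : chi' (chi p) = p := by
  have : chi'.comp chi = AlgHom.id ℂ (MvPolynomial (Fin 6) ℂ) := by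
    apply MvPolynomial.algHom_ext
    intro i
    fin_cases i
    · show chi' (chi (X 0)) = X 0
      rw [chi_X0, chi'_X0]
    · show chi' (chi (X 1)) = X 1
      rw [chi_X1, chi'_X1]
    · show chi' (chi (X 2)) = X 2
      rw [chi_X2, chi'_X2]
    · show chi' (chi (X 3)) = X 3
      rw [chi_X3, map_add, chi'_X3, chi'_X4]
      linear_combination (X 3 : MvPolynomial (Fin 6) ℂ) * C_half_mul_two
    · show chi' (chi (X 4)) = X 4
      rw [chi_X4, map_sub, chi'_X3, chi'_X4]
      linear_combination (X 4 : MvPolynomial (Fin 6) ℂ) * C_half_mul_two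
    · show chi' (chi (X 5)) = X 5
      rw [chi_X5, chi'_X5]
  exact congrFun (congrArg (fun f => f.toFun) this) p

lemma C_quarter : (C (2:ℂ)⁻¹ : MvPolynomial (Fin 6) ℂ) * C (2:ℂ)⁻¹ = C (4:ℂ)⁻¹ := by
  rw [← C_mul]; norm_num

lemma C_quarter_mul_four : (C (4:ℂ)⁻¹ : MvPolynomial (Fin 6) ℂ) * 4 = 1 := by
  rw [← map_ofNat (C : ℂ →+* MvPolynomial (Fin 6) ℂ) 4, ← C_mul]
  norm_num

lemma chi'_g : chi' (X 2 * X 5 - X 3 * X 4) =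
    C (4:ℂ)⁻¹ * ((X 4) ^ 2 - ((X 3) ^ 2 - 4 * X 2 * X 5)) := by
  rw [map_sub, map_mul, map_mul, chi'_X2, chi'_X3, chi'_X4, chi'_X5]
  linear_combination ((X 4 : MvPolynomial (Fin 6) ℂ) ^ 2 - X 3 ^ 2) * C_quarter
    - (X 2 * X 5 : MvPolynomial (Fin 6) ℂ) * C_quarter_mul_four

/-- The kernel of `φ` is the principal ideal generated by `S₁₀² − (T₁₀² − 4T₈T₁₂)`. -/
theorem kernel_of_phi :
    RingHom.ker (phi : MvPolynomial (Fin 6) ℂ →+* MvPolynomial (Fin 6) ℂ) =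
      Ideal.span {(X 4) ^ 2 - ((X 3) ^ 2 - 4 * X 2 * X 5)} := by
  apply le_antisymm
  · intro p hp
    have hp0 : phi p = 0 := hp
    have hmu : mu (chi p) = 0 := by rw [← phi_eq]; exact hp0
    obtain ⟨c, hc⟩ := (Ideal.mem_span_singleton.1 (ker_mu_le _ hmu))
    have hpc : p = chi' (chi p) := (chi'_chi p).symm
    rw [hc, map_mul, chi'_g] at hpc
    rw [hpc]
    exact Ideal.mem_span_singleton.2 ⟨C (4:ℂ)⁻¹ * chi' c, by ring⟩
  · rw [Ideal.span_le, Set.singleton_subset_iff]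
    have : phi ((X 4) ^ 2 - ((X 3) ^ 2 - 4 * X 2 * X 5)) = 0 := by
      rw [map_sub, map_sub, map_pow, map_pow, map_mul, map_mul,
        map_ofNat, phi_X2, phi_X3, phi_X4, phi_X5]
      rw [t8, t10, s10, t12]
      ring
    exact this
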